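/- Let Σ be a measurable space, m < n natural numbers, and e₁,…,e_m : Σ → ℂⁿ measurable functions. Then there exists a measurable function e : Σ → ℂⁿ such that ‖e(x)‖ = 1 and ⟨e_j(x), e(x)⟩ = 0 for all x ∈ Σ and j = 1,…,m. -/

import Mathlib

open Complex
open InnerProductSpace

/-- Measurable selection of a unit vector orthogonal to `m < n` measurable families of
vectors in `ℂⁿ`. -/
theorem stmt_11 {S : Type*} [MeasurableSpace S] (m n : ℕ) (hmn : m < n)
    [MeasurableSpace (EuclideanSpace ℂ (Fin n))] [BorelSpace (EuclideanSpace ℂ (Fin n))]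
    (e : Fin m → S → EuclideanSpace ℂ (Fin n)) (he : ∀ j, Measurable (e j)) :
    ∃ f : S → EuclideanSpace ℂ (Fin n), Measurable f ∧
      (∀ x, ‖f x‖ = 1) ∧ ∀ x, ∀ j, inner ℂ (e j x) (f x) = (0 : ℂ) := by
  classical
  haveI : WellFoundedLT (Fin (m + n)) := inferInstance
  -- the combined family: the `e j x` followed by the standard basis
  set b : OrthonormalBasis (Fin n) ℂ (EuclideanSpace ℂ (Fin n)) :=
    EuclideanSpace.basisFun (Fin n) ℂ with hb
  set V : S → Fin (m + n) → EuclideanSpace ℂ (Fin n) :=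
    fun x => Fin.append (fun j => e j x) (fun k => b k) with hV
  have hVmeas : ∀ i, Measurable fun x => V x i := by
    intro i
    refine Fin.addCases (fun j => ?_) (fun k => ?_) i
    · simpa [hV, Fin.append_left] using he j
    · simpa [hV, Fin.append_right] using measurable_const
  set u : S → Fin (m + n) → EuclideanSpace ℂ (Fin n) := fun x i => gramSchmidt ℂ (V x) i with hu
  have humeas : ∀ i, Measurable fun x => u x i := by
    intro i
    induction i using WellFoundedLT.induction with
    | _ i ih =>
      have hrw : (fun x => u x i) = fun x =>
          V x i - ∑ j ∈ Finset.Iio i,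
            ((inner ℂ (u x j) (V x i) / (RCLike.ofReal (‖u x j‖ ^ 2) : ℂ)) • u x j) := by
        funext x
        simp only [hu]
        rw [gramSchmidt_def ℂ (V x) i]
        simp only [Submodule.starProjection_singleton]
      rw [hrw]
      refine (hVmeas i).sub (Finset.measurable_sum _ fun j hj => ?_)
      have hj' : j < i := Finset.mem_Iio.1 hj
      exact (((ih j hj').inner (hVmeas i)).div
        ((measurable_ofReal.comp (((ih j hj').norm).pow measurable_const)))).smul (ih j hj')
  -- the ℕ-indexed tail of the Gram–Schmidt family
  set w : ℕ → S → EuclideanSpace ℂ (Fin n) := fun k x => if h : k < n then u x (Fin.natAdd m ⟨k, h⟩) else 0 with hw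
  have hwmeas : ∀ k, Measurable (w k) := by
    intro k
    by_cases h : k < n
    · simpa [hw, h] using humeas (Fin.natAdd m ⟨k, h⟩)
    · simpa [hw, h] using measurable_const
  -- existence of a nonzero tail vector
  have hex : ∀ x, ∃ k, w k x ≠ 0 := by
    intro x
    by_contra hcon
    push_neg at hcon
    -- all tail Gram–Schmidt vectors vanish
    have hz : ∀ k : Fin n, u x (Fin.natAdd m k) = 0 := by
      intro k
      have := hcon k.1
      simpa [hw, k.2, Fin.natAdd] using this
    set s : Finset (EuclideanSpace ℂ (Fin n)) := Finset.image (fun j : Fin m => u x (Fin.castAdd n j)) Finset.univ with hs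
    have htop : (⊤ : Submodule ℂ (EuclideanSpace ℂ (Fin n))) ≤ Submodule.span ℂ (s : Set (EuclideanSpace ℂ (Fin n))) := by
      have h1 : (⊤ : Submodule ℂ (EuclideanSpace ℂ (Fin n))) = Submodule.span ℂ (Set.range b) := (b.toBasis.span_eq).symm
      have h2 : Set.range b ⊆ Set.range (V x) := by
        rintro _ ⟨k, rfl⟩
        exact ⟨Fin.natAdd m k, by simp [hV, Fin.append_right]⟩
      have h3 : Submodule.span ℂ (Set.range (V x)) = Submodule.span ℂ (Set.range (u x)) :=
        (span_gramSchmidt ℂ (V x)).symm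
      have h4 : Set.range (u x) ⊆ insert 0 (s : Set (EuclideanSpace ℂ (Fin n))) := by
        rintro _ ⟨i, rfl⟩
        by_cases hi : i.1 < m
        · right
          refine Finset.mem_coe.2 (Finset.mem_image.2 ⟨⟨i.1, hi⟩, Finset.mem_univ _, ?_⟩)
          have hcast : Fin.castAdd n ⟨i.1, hi⟩ = i := Fin.ext rfl
          rw [hcast]
        · left
          have hi' : i.1 - m < n := by omega
          have : Fin.natAdd m ⟨i.1 - m, hi'⟩ = i := Fin.ext (by simp only [Fin.coe_natAdd]; omega)
          rw [← this]
          exact hz _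
      calc (⊤ : Submodule ℂ (EuclideanSpace ℂ (Fin n))) = Submodule.span ℂ (Set.range b) := h1
        _ ≤ Submodule.span ℂ (Set.range (V x)) := Submodule.span_mono h2
        _ = Submodule.span ℂ (Set.range (u x)) := h3
        _ ≤ Submodule.span ℂ (insert 0 (s : Set (EuclideanSpace ℂ (Fin n)))) := Submodule.span_mono h4
        _ = Submodule.span ℂ (s : Set (EuclideanSpace ℂ (Fin n))) := Submodule.span_insert_zero
    have hle : n ≤ m := by
      have h5 : Module.finrank ℂ (EuclideanSpace ℂ (Fin n)) ≤ Module.finrank ℂ (Submodule.span ℂ (s : Set (EuclideanSpace ℂ (Fin n)))) := by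
        simpa [finrank_top] using Submodule.finrank_mono htop
      have h6 : Module.finrank ℂ (Submodule.span ℂ (s : Set (EuclideanSpace ℂ (Fin n)))) ≤ s.card :=
        finrank_span_finset_le_card s
      have h7 : s.card ≤ m := le_trans Finset.card_image_le (by simp)
      have h8 : Module.finrank ℂ (EuclideanSpace ℂ (Fin n)) = n := finrank_euclideanSpace_fin
      omega
    omega
  -- the selection
  refine ⟨fun x => ((‖w (Nat.find (hex x)) x‖⁻¹ : ℝ) : ℂ) • w (Nat.find (hex x)) x, ?_, ?_, ?_⟩
  · exact Measurable.find
      (f := fun k x => ((‖w k x‖⁻¹ : ℝ) : ℂ) • w k x)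
      (p := fun k x => w k x ≠ 0)
      (fun k => (measurable_ofReal.comp ((hwmeas k).norm.inv)).smul (hwmeas k))
      (fun k => ((hwmeas k) (measurableSet_singleton 0)).compl)
      hex
  · intro x
    have hne : w (Nat.find (hex x)) x ≠ 0 := Nat.find_spec (hex x)
    rw [norm_smul]
    simp [norm_ne_zero_iff.2 hne, inv_mul_cancel₀ (norm_ne_zero_iff.2 hne)]
  · intro x j
    set k := Nat.find (hex x) with hk
    have hne : w k x ≠ 0 := Nat.find_spec (hex x)
    have hkn : k < n := by
      by_contra h
      rw [hw] at hne
      simp [h] at hne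
    have hwu : w k x = u x (Fin.natAdd m ⟨k, hkn⟩) := by simp [hw, hkn]
    set i₀ : Fin (m + n) := Fin.natAdd m ⟨k, hkn⟩ with hi₀
    -- `u x i₀` is orthogonal to the span of the earlier vectors, which contains `e j x`
    have horth : u x i₀ ∈ (Submodule.span ℂ (V x '' Set.Iio i₀))ᗮ := by
      rw [← span_gramSchmidt_Iio ℂ (V x) i₀]
      rw [Submodule.mem_orthogonal]
      intro v hv
      induction hv using Submodule.span_induction with
      | mem y hy =>
        obtain ⟨i, hi, rfl⟩ := hy
        exact gramSchmidt_orthogonal ℂ (V x) (ne_of_lt hi)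
      | zero => simp
      | add y z _ _ hy hz => rw [inner_add_left, hy, hz, add_zero]
      | smul c y _ hy => rw [inner_smul_left, hy, mul_zero]
    have hmem : e j x ∈ Submodule.span ℂ (V x '' Set.Iio i₀) := by
      have h1 : Fin.castAdd n j < i₀ := by
        rw [Fin.lt_def]
        simp [hi₀]
        omega
      have h2 : V x (Fin.castAdd n j) = e j x := by simp [hV, Fin.append_left]
      exact Submodule.subset_span ⟨Fin.castAdd n j, h1, h2⟩
    have hzero : (inner ℂ (e j x) (u x i₀) : ℂ) = 0 := horth (e j x) hmem
    rw [inner_smul_right, ← hk, hwu, hzero, mul_zero]
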